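/- Let p,q ∈ ℝⁿ₊, p',q' ∈ ℝⁿ'₊, and ε, η ≥ 0. Then (p,q) ≻_{ε,η} (p',q') holds if and only if β_x(p,q) ≤ β_{x+ε}(p',q') + η for all x ∈ ℝ. -/

import Mathlib

open scoped BigOperators

/-- A test: a vector with entries in `[0,1]`. -/
def IsTest {ι : Type*} [Fintype ι] (t : ι → ℝ) : Prop := ∀ i, 0 ≤ t i ∧ t i ≤ 1

/-- Dot product of two vectors. -/
def dot {ι : Type*} [Fintype ι] (t p : ι → ℝ) : ℝ := ∑ i, t i * p i

/-- `beta x p q` is the infimum of `t ⬝ q` over tests `t` with `t ⬝ p ≥ x`,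
with value `⊤` (`+∞`) when no feasible test exists. -/
noncomputable def beta {ι : Type*} [Fintype ι] (x : ℝ) (p q : ι → ℝ) : EReal :=
  sInf {y : EReal | ∃ t : ι → ℝ, IsTest t ∧ x ≤ dot t p ∧ y = ((dot t q : ℝ) : EReal)}

/-- `alpha y p q` is the supremum of `t ⬝ p` over tests `t` with `t ⬝ q ≤ y`. -/
noncomputable def alpha {ι : Type*} [Fintype ι] (y : ℝ) (p q : ι → ℝ) : ℝ :=
  sSup {x : ℝ | ∃ t : ι → ℝ, IsTest t ∧ dot t q ≤ y ∧ x = dot t p}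

/-- A nonnegative matrix all of whose column sums are at most `1`. -/
def Substochastic {ι' ι : Type*} [Fintype ι'] [Fintype ι] (M : Matrix ι' ι ℝ) : Prop :=
  (∀ i j, 0 ≤ M i j) ∧ ∀ j, ∑ i, M i j ≤ 1

/-- A nonnegative matrix all of whose column sums equal `1`. -/
def Stochastic {ι' ι : Type*} [Fintype ι'] [Fintype ι] (M : Matrix ι' ι ℝ) : Prop :=
  (∀ i j, 0 ≤ M i j) ∧ ∀ j, ∑ i, M i j = 1

/-- Relative submajorization: `(p,q) ≻ (p',q')`. -/
def SubMaj {ι ι' : Type*} [Fintype ι] [Fintype ι'] (p q : ι → ℝ) (p' q' : ι' → ℝ) : Prop :=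
  ∃ M : Matrix ι' ι ℝ, Substochastic M ∧
    (∀ i, p' i ≤ M.mulVec p i) ∧ (∀ i, M.mulVec q i ≤ q' i)

/-- Relative majorization: `(p,q) ≽ (p',q')`. -/
def RelMaj {ι ι' : Type*} [Fintype ι] [Fintype ι'] (p q : ι → ℝ) (p' q' : ι' → ℝ) : Prop :=
  ∃ M : Matrix ι' ι ℝ, Stochastic M ∧ M.mulVec p = p' ∧ M.mulVec q = q'

/-- Approximate relative submajorization: `(p,q) ≻_{ε,η} (p',q')`. -/
def ApproxSubMaj {ι ι' : Type*} [Fintype ι] [Fintype ι'] (ε η : ℝ)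
    (p q : ι → ℝ) (p' q' : ι' → ℝ) : Prop :=
  ∃ (M : Matrix ι' ι ℝ) (a b : ι' → ℝ), Substochastic M ∧
    (∀ i, 0 ≤ a i) ∧ (∀ i, 0 ≤ b i) ∧ (∑ i, a i) ≤ ε ∧ (∑ i, b i) ≤ η ∧
    (∀ i, p' i - a i ≤ M.mulVec p i) ∧ (∀ i, M.mulVec q i ≤ q' i + b i)

/-- Partial sum `∑_{j=1}^k v_{π(j)}` of the first `k` entries of `v` in the order given by `π`. -/
def psum {n : ℕ} (v : Fin n → ℝ) (π : Equiv.Perm (Fin n)) (k : ℕ) : ℝ :=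
  ∑ j ∈ Finset.univ.filter (fun j : Fin n => (j : ℕ) < k), v (π j)

/-- `λ*_z(R→R')`: the largest `λ ∈ [0,1]` with `(p,q) ≻ (λ p', z q')`. -/
noncomputable def lambdaStar {ι ι' : Type*} [Fintype ι] [Fintype ι'] (z : ℝ)
    (p q : ι → ℝ) (p' q' : ι' → ℝ) : ℝ :=
  sSup {lam : ℝ | 0 ≤ lam ∧ lam ≤ 1 ∧
    SubMaj p q (fun i => lam * p' i) (fun i => z * q' i)}

/-- `z*_λ(R→R')`: the smallest `z ≥ 0` with `(p,q) ≻ (λ p', z q')`. -/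
noncomputable def zStar {ι ι' : Type*} [Fintype ι] [Fintype ι'] (lam : ℝ)
    (p q : ι → ℝ) (p' q' : ι' → ℝ) : ℝ :=
  sInf {z : ℝ | 0 ≤ z ∧ SubMaj p q (fun i => lam * p' i) (fun i => z * q' i)}

/-- `ε*_z(R→R')`: the smallest error of the first kind. -/
noncomputable def epsStar {ι ι' : Type*} [Fintype ι] [Fintype ι'] (z : ℝ)
    (p q : ι → ℝ) (p' q' : ι' → ℝ) : ℝ :=
  sInf {ε : ℝ | 0 ≤ ε ∧ ApproxSubMaj ε 0 p q p' (fun i => z * q' i)}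

/-- `η̂*_z(R→R')`: the smallest error of the second kind. -/
noncomputable def etaStar {ι ι' : Type*} [Fintype ι] [Fintype ι'] (z : ℝ)
    (p q : ι → ℝ) (p' q' : ι' → ℝ) : ℝ :=
  sInf {η : ℝ | 0 ≤ η ∧ ApproxSubMaj 0 η p q p' (fun i => z * q' i)}

/-- Relative entropy `D(u,v) = Σ u_k ln(u_k/v_k)` (with `0 ln 0 = 0`). -/
noncomputable def relEnt {ι : Type*} [Fintype ι] (u v : ι → ℝ) : ℝ :=
  ∑ k, u k * Real.log (u k / v k)

namespace Stmt8Aux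

lemma le_foldr_max_init (l : List ℝ) (b : ℝ) : b ≤ l.foldr max b := by
  induction l with
  | nil => simp
  | cons a t ih => exact le_trans ih (le_max_right _ _)

lemma le_foldr_max {l : List ℝ} {y : ℝ} (b : ℝ) (hy : y ∈ l) : y ≤ l.foldr max b := by
  induction l with
  | nil => simp at hy
  | cons a t ih =>
    rcases List.mem_cons.1 hy with h | h
    · subst h; exact le_max_left _ _
    · exact le_trans (ih h) (le_max_right _ _)

lemma foldr_max_le {l : List ℝ} {b B : ℝ} (hb : b ≤ B) (h : ∀ y ∈ l, y ≤ B) :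
    l.foldr max b ≤ B := by
  induction l with
  | nil => simpa
  | cons a t ih =>
    exact max_le (h a (List.mem_cons_self)) (ih fun y hy => h y (List.mem_cons_of_mem _ hy))

lemma list_sum_map_sub {α : Type*} (l : List α) (f g : α → ℝ) :
    (l.map fun a => f a - g a).sum = (l.map f).sum - (l.map g).sum := by
  induction l with
  | nil => simp
  | cons a t ih => simp [ih]; ring

lemma list_sum_le_sum {α : Type*} {l : List α} {f g : α → ℝ}
    (h : ∀ a ∈ l, f a ≤ g a) : (l.map f).sum ≤ (l.map g).sum := by
  induction l with
  | nil => simp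
  | cons a t ih =>
    simp only [List.map_cons, List.sum_cons]
    exact add_le_add (h a (List.mem_cons_self))
      (ih fun y hy => h y (List.mem_cons_of_mem _ hy))

/-- sum of hockey sticks -/
def sticks (C : List (ℝ × ℝ)) (x : ℝ) : ℝ := (C.map fun cg => cg.1 * max (x - cg.2) 0).sum

/-- upper envelope of lines `s*x - w` and `0` -/
def env (L : List (ℝ × ℝ)) (x : ℝ) : ℝ := (L.map fun sw => sw.1 * x - sw.2).foldr max 0

def Rel (a b : ℝ × ℝ) : Prop := b.1 < a.1 ∨ (b.1 = a.1 ∧ a.2 ≤ b.2)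

noncomputable instance : DecidableRel Rel := fun a b => by unfold Rel; infer_instance

instance : IsTrans (ℝ × ℝ) Rel :=
  ⟨by
    rintro a b c (h1 | ⟨h1, h1'⟩) (h2 | ⟨h2, h2'⟩)
    · exact Or.inl (lt_trans h2 h1)
    · exact Or.inl (h2 ▸ h1)
    · exact Or.inl (h1 ▸ h2)
    · exact Or.inr ⟨h2.trans h1, h1'.trans h2'⟩⟩

instance : IsTotal (ℝ × ℝ) Rel :=
  ⟨by
    intro a b
    rcases lt_trichotomy a.1 b.1 with h | h | h
    · exact Or.inr (Or.inl h)
    · rcases le_total a.2 b.2 with h2 | h2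
      · exact Or.inl (Or.inr ⟨h.symm, h2⟩)
      · exact Or.inr (Or.inr ⟨h, h2⟩)
    · exact Or.inl (Or.inl h)⟩

lemma sticks_bounds {C : List (ℝ × ℝ)} (hC : ∀ cg ∈ C, 0 ≤ cg.1) {x y : ℝ} (hxy : x ≤ y) :
    sticks C x ≤ sticks C y ∧ sticks C y ≤ sticks C x + (C.map Prod.fst).sum * (y - x) := by
  induction C with
  | nil => simp [sticks]
  | cons a t ih =>
    have ha := hC a (List.mem_cons_self)
    have iht := ih fun cg h => hC cg (List.mem_cons_of_mem _ h)
    have h1 : max (x - a.2) 0 ≤ max (y - a.2) 0 := by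
      apply max_le_max _ le_rfl; linarith
    have h2 : max (y - a.2) 0 ≤ max (x - a.2) 0 + (y - x) := by
      rcases le_total (x - a.2) 0 with h | h
      · rcases le_total (y - a.2) 0 with h' | h'
        · rw [max_eq_right h, max_eq_right h']; linarith
        · rw [max_eq_right h, max_eq_left h']; linarith
      · rw [max_eq_left h, max_eq_left (by linarith : (0:ℝ) ≤ y - a.2)]; linarith
    have hh1 : a.1 * max (x - a.2) 0 ≤ a.1 * max (y - a.2) 0 := mul_le_mul_of_nonneg_left h1 ha
    have hh2 : a.1 * max (y - a.2) 0 ≤ a.1 * max (x - a.2) 0 + a.1 * (y - x) := by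
      calc a.1 * max (y - a.2) 0 ≤ a.1 * (max (x - a.2) 0 + (y - x)) :=
            mul_le_mul_of_nonneg_left h2 ha
        _ = a.1 * max (x - a.2) 0 + a.1 * (y - x) := by ring
    constructor
    · simp only [sticks, List.map_cons, List.sum_cons] at iht ⊢
      exact add_le_add hh1 iht.1
    · simp only [sticks, List.map_cons, List.sum_cons] at iht ⊢
      have hexp : (a.1 + (t.map Prod.fst).sum) * (y - x)
          = a.1 * (y - x) + (t.map Prod.fst).sum * (y - x) := by ring
      rw [hexp]
      linarith [iht.2]

theorem rep_exists : ∀ (L : List (ℝ × ℝ)), (∀ sw ∈ L, 0 ≤ sw.1 ∧ 0 ≤ sw.2) → L.Pairwise Rel →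
    ∃ C : List (ℝ × ℝ), (∀ cg ∈ C, 0 ≤ cg.1 ∧ 0 ≤ cg.2) ∧
      (C.map Prod.fst).sum = (L.map Prod.fst).foldr max 0 ∧
      (C.map fun cg => cg.1 * cg.2).sum ≤ (L.headI).2 ∧
      (∀ x, 0 ≤ x → sticks C x = env L x) := by
  intro L
  induction L with
  | nil =>
    intro _ _
    exact ⟨[], by simp, by simp, by rw [show (List.headI ([] : List (ℝ×ℝ))).2 = 0 from rfl]; simp,
      fun x _ => by simp [sticks, env]⟩
  | cons hd T ih =>
    intro hnn hsorted
    obtain ⟨s₀, w₀⟩ := hd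
    have h0 := hnn (s₀, w₀) (List.mem_cons_self)
    have hs₀ : 0 ≤ s₀ := h0.1
    have hw₀ : 0 ≤ w₀ := h0.2
    have hR : ∀ sw ∈ T, Rel (s₀, w₀) sw := (List.pairwise_cons.1 hsorted).1
    have hsortT : T.Pairwise Rel := (List.pairwise_cons.1 hsorted).2
    have hnnT : ∀ sw ∈ T, 0 ≤ sw.1 ∧ 0 ≤ sw.2 :=
      fun sw h => hnn sw (List.mem_cons_of_mem _ h)
    obtain ⟨C, hCnn, hCsum, _, hCid⟩ := ih hnnT hsortT
    have hsle : ∀ sw ∈ T, sw.1 ≤ s₀ := by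
      intro sw h
      rcases hR sw h with h' | ⟨h', _⟩
      · exact le_of_lt h'
      · exact le_of_eq h'
    have hST : (T.map Prod.fst).foldr max 0 ≤ s₀ := by
      apply foldr_max_le hs₀
      intro y hy
      obtain ⟨sw, hsw, rfl⟩ := List.mem_map.1 hy
      exact hsle sw hsw
    have henvcons : ∀ x, env ((s₀, w₀) :: T) x = max (s₀ * x - w₀) (env T x) := fun x => rfl
    rcases le_or_gt s₀ 0 with hs₀le | hs₀pos
    · -- s₀ = 0 case
      have hs0 : s₀ = 0 := le_antisymm hs₀le hs₀
      have hallz : ∀ sw ∈ T, sw.1 = 0 := fun sw h =>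
        le_antisymm (hs0 ▸ hsle sw h) (hnnT sw h).1
      refine ⟨[], by simp, ?_, ?_, ?_⟩
      · have h1 : (T.map Prod.fst).foldr max 0 ≤ 0 := by
          apply foldr_max_le le_rfl
          intro y hy; obtain ⟨sw, hsw, rfl⟩ := List.mem_map.1 hy
          exact le_of_eq (hallz sw hsw)
        have h2 := le_foldr_max_init (T.map Prod.fst) 0
        simp only [List.map_cons, List.foldr_cons, List.map_nil, List.sum_nil]
        rw [le_antisymm h1 h2, hs0]; simp
      · rw [show (List.headI ((s₀,w₀) :: T)).2 = w₀ from rfl]; simpa using hw₀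
      · intro x hx
        have hTz : env T x = 0 := by
          have h1 : env T x ≤ 0 := by
            apply foldr_max_le le_rfl
            intro y hy; obtain ⟨sw, hsw, rfl⟩ := List.mem_map.1 hy
            rw [hallz sw hsw]
            simp [(hnnT sw hsw).2]
          exact le_antisymm h1 (le_foldr_max_init _ _)
        rw [henvcons, hTz, hs0]
        rw [max_eq_right (by linarith : (0:ℝ) * x - w₀ ≤ 0)]
        simp [sticks]
    · -- s₀ > 0
      have hSle : (C.map Prod.fst).sum ≤ s₀ := le_trans (le_of_eq hCsum) hST
      have hCnn1 : ∀ cg ∈ C, 0 ≤ cg.1 := fun cg h => (hCnn cg h).1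
      set SC := (C.map Prod.fst).sum with hSC
      set d : ℝ → ℝ := fun x => s₀ * x - w₀ - sticks C x with hd
      have hdmono : ∀ {x y : ℝ}, x ≤ y → d x ≤ d y := by
        intro x y hxy
        have h := (sticks_bounds hCnn1 hxy).2
        have key : 0 ≤ (s₀ - SC) * (y - x) :=
          mul_nonneg (by linarith) (by linarith)
        simp only [hd]
        nlinarith
      have hdlip : ∀ {x y : ℝ}, x ≤ y → d y ≤ d x + s₀ * (y - x) := by
        intro x y hxy
        have h := (sticks_bounds hCnn1 hxy).1
        simp only [hd]; nlinarith
      -- the witness X where the head line dominates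
      set X : ℝ := (T.map (fun sw => if sw.1 < s₀ then (w₀ - sw.2)/(s₀ - sw.1) else 0)).foldr
        max (w₀/s₀) with hXdef
      have hX0 : 0 ≤ X := le_trans (div_nonneg hw₀ hs₀) (le_foldr_max_init _ _)
      have hXw : w₀ ≤ s₀ * X := by
        have h1 : w₀/s₀ ≤ X := le_foldr_max_init _ _
        rw [div_le_iff₀ hs₀pos] at h1; linarith
      have hXA : env T X ≤ s₀ * X - w₀ := by
        apply foldr_max_le (by linarith)
        intro y hy
        obtain ⟨sw, hsw, rfl⟩ := List.mem_map.1 hy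
        by_cases hlt : sw.1 < s₀
        · have hmem : (if sw.1 < s₀ then (w₀ - sw.2)/(s₀ - sw.1) else 0) ≤ X :=
            le_foldr_max _ (List.mem_map_of_mem hsw)
          rw [if_pos hlt] at hmem
          rw [div_le_iff₀ (by linarith)] at hmem
          nlinarith
        · have hww : w₀ ≤ sw.2 := by
            rcases hR sw hsw with h' | ⟨_, h'⟩
            · exact absurd h' hlt
            · exact h'
          have heq : sw.1 = s₀ := le_antisymm (hsle sw hsw) (not_lt.1 hlt)
          rw [heq]; linarith
      set A : Set ℝ := {x | 0 ≤ x ∧ 0 ≤ d x} with hA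
      have hXmem : X ∈ A := by
        refine ⟨hX0, ?_⟩
        have hid := hCid X hX0
        simp only [hd]
        rw [hid]; linarith
      have hAne : A.Nonempty := ⟨X, hXmem⟩
      have hAbdd : BddBelow A := ⟨0, fun x hx => hx.1⟩
      have hx₀0 : 0 ≤ sInf A := le_csInf hAne fun x hx => hx.1
      set x₀ := sInf A with hx₀def
      have hdge : 0 ≤ d x₀ := by
        by_contra hcon
        push_neg at hcon
        have hδ : 0 < (-(d x₀))/s₀ := div_pos (by linarith) hs₀pos
        obtain ⟨a, haA, ha⟩ := (csInf_lt_iff hAbdd hAne).1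
          (show sInf A < x₀ + (-(d x₀))/s₀ by rw [← hx₀def]; linarith)
        have hax : x₀ ≤ a := csInf_le hAbdd haA
        have hlip := hdlip hax
        have haup : a - x₀ < (-(d x₀))/s₀ := by linarith
        have h2 : s₀ * (a - x₀) < s₀ * ((-(d x₀))/s₀) :=
          mul_lt_mul_of_pos_left haup hs₀pos
        rw [mul_div_cancel₀ _ (ne_of_gt hs₀pos)] at h2
        have : d a < 0 := by linarith
        exact absurd haA.2 (not_le.2 this)
      have hdle : d x₀ ≤ 0 := by
        rcases eq_or_lt_of_le hx₀0 with heq | hpos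
        · have hs : sticks C 0 = 0 := by
            apply List.sum_eq_zero
            intro y hy
            obtain ⟨cg, hcg, rfl⟩ := List.mem_map.1 hy
            rw [max_eq_right (by linarith [(hCnn cg hcg).2] : 0 - cg.2 ≤ 0), mul_zero]
          rw [← heq]
          simp only [hd]
          rw [hs]; linarith
        · by_contra hcon
          push_neg at hcon
          have hxlt : max 0 (x₀ - d x₀ / s₀) < x₀ :=
            max_lt hpos (sub_lt_self _ (div_pos hcon hs₀pos))
          have hx0' : (0:ℝ) ≤ max 0 (x₀ - d x₀ / s₀) := le_max_left _ _
          have hxnA : max 0 (x₀ - d x₀ / s₀) ∉ A := fun hmem =>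
            absurd (csInf_le hAbdd hmem) (not_le.2 hxlt)
          have hdx : d (max 0 (x₀ - d x₀ / s₀)) < 0 := by
            by_contra h'
            push_neg at h'
            exact hxnA ⟨hx0', h'⟩
          have h1 := hdlip (le_of_lt hxlt)
          have h2 : x₀ - max 0 (x₀ - d x₀ / s₀) ≤ d x₀ / s₀ := by
            have : x₀ - d x₀ / s₀ ≤ max 0 (x₀ - d x₀ / s₀) := le_max_right _ _
            linarith
          have h3 : s₀ * (x₀ - max 0 (x₀ - d x₀ / s₀)) ≤ s₀ * (d x₀ / s₀) :=
            mul_le_mul_of_nonneg_left h2 hs₀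
          rw [mul_div_cancel₀ _ (ne_of_gt hs₀pos)] at h3
          linarith
      have hdx₀ : d x₀ = 0 := le_antisymm hdle hdge
      have hstx₀ : sticks C x₀ = s₀ * x₀ - w₀ := by
        simp only [hd] at hdx₀; linarith
      -- min/max identity and the c*min sum
      have hmin : ∀ cg : ℝ × ℝ, cg.1 * min cg.2 x₀ = cg.1 * x₀ - cg.1 * max (x₀ - cg.2) 0 := by
        intro cg
        rcases le_total cg.2 x₀ with h | h
        · rw [min_eq_left h, max_eq_left (by linarith)]; ring
        · rw [min_eq_right h, max_eq_right (by linarith)]; ring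
      have hminsum : (C.map fun cg => cg.1 * min cg.2 x₀).sum = SC * x₀ - (s₀ * x₀ - w₀) := by
        calc (C.map fun cg => cg.1 * min cg.2 x₀).sum
            = (C.map fun cg => cg.1 * x₀ - cg.1 * max (x₀ - cg.2) 0).sum := by
              simp only [hmin]
          _ = (C.map fun cg => cg.1 * x₀).sum - sticks C x₀ := by
              rw [list_sum_map_sub]; rfl
          _ = SC * x₀ - (s₀ * x₀ - w₀) := by
              rw [List.sum_map_mul_right, hstx₀]
      refine ⟨(C.map fun cg => (cg.1, min cg.2 x₀)) ++ [(s₀ - SC, x₀)], ?_, ?_, ?_, ?_⟩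
      · intro cg hcg
        rcases List.mem_append.1 hcg with h | h
        · obtain ⟨cg', h', rfl⟩ := List.mem_map.1 h
          exact ⟨(hCnn cg' h').1, le_min (hCnn cg' h').2 hx₀0⟩
        · rw [List.mem_singleton.1 h]
          refine ⟨?_, hx₀0⟩
          show (0:ℝ) ≤ s₀ - SC
          linarith
      · rw [List.map_append, List.sum_append, List.map_map]
        have : (Prod.fst ∘ fun cg : ℝ × ℝ => (cg.1, min cg.2 x₀)) = Prod.fst := funext fun _ => rfl
        rw [this]
        simp only [List.map_cons, List.foldr_cons, List.map_singleton, List.sum_singleton]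
        rw [max_eq_left hST]
        simp only [List.map_cons, List.map_nil, List.sum_cons, List.sum_nil]
        ring
      · rw [List.map_append, List.sum_append, List.map_map]
        have : ((fun cg : ℝ × ℝ => cg.1 * cg.2) ∘ fun cg : ℝ × ℝ => (cg.1, min cg.2 x₀))
            = fun cg : ℝ × ℝ => cg.1 * min cg.2 x₀ := funext fun _ => rfl
        rw [this, hminsum]
        rw [show (List.headI ((s₀,w₀) :: T)).2 = w₀ from rfl]
        simp only [List.map_singleton, List.sum_singleton]
        nlinarith [le_refl (0:ℝ)]
      · intro x hx
        have hstep : sticks ((C.map fun cg => (cg.1, min cg.2 x₀)) ++ [(s₀ - SC, x₀)]) x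
            = (C.map fun cg => cg.1 * max (x - min cg.2 x₀) 0).sum
              + (s₀ - SC) * max (x - x₀) 0 := by
          unfold sticks
          rw [List.map_append, List.sum_append, List.map_map]
          have : ((fun cg : ℝ × ℝ => cg.1 * max (x - cg.2) 0) ∘ fun cg : ℝ × ℝ => (cg.1, min cg.2 x₀))
              = fun cg : ℝ × ℝ => cg.1 * max (x - min cg.2 x₀) 0 := funext fun _ => rfl
          rw [this]
          simp only [List.map_singleton, List.sum_singleton]
        rcases lt_or_ge x x₀ with hxlt | hxge
        · have hxnA : x ∉ A := fun hmem => absurd (csInf_le hAbdd hmem) (not_le.2 hxlt)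
          have hdx : d x < 0 := by
            by_contra h'
            push_neg at h'
            exact hxnA ⟨hx, h'⟩
          have hsame : (C.map fun cg => cg.1 * max (x - min cg.2 x₀) 0)
              = C.map fun cg => cg.1 * max (x - cg.2) 0 := by
            apply List.map_congr_left
            intro cg hcg
            rcases le_total cg.2 x₀ with h | h
            · rw [min_eq_left h]
            · rw [min_eq_right h, max_eq_right (by linarith), max_eq_right (by linarith)]
          rw [hstep, hsame, henvcons]
          rw [max_eq_right (by linarith : x - x₀ ≤ 0), mul_zero, add_zero]
          have henvT : env T x = sticks C x := (hCid x hx).symm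
          rw [max_eq_right (show s₀ * x - w₀ ≤ env T x by
            rw [henvT]
            simp only [hd] at hdx
            linarith), henvT]
          rfl
        · have hdxge : 0 ≤ d x := le_trans (le_of_eq hdx₀.symm) (hdmono hxge)
          have hsame : (C.map fun cg => cg.1 * max (x - min cg.2 x₀) 0)
              = C.map fun cg => cg.1 * x - cg.1 * min cg.2 x₀ := by
            apply List.map_congr_left
            intro cg hcg
            rw [max_eq_left (by
              have : min cg.2 x₀ ≤ x₀ := min_le_right _ _
              linarith)]
            ring
          rw [hstep, hsame, list_sum_map_sub, List.sum_map_mul_right, hminsum, henvcons]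
          rw [max_eq_left (by linarith : (0:ℝ) ≤ x - x₀)]
          have henvT : env T x = sticks C x := (hCid x hx).symm
          rw [max_eq_left (show env T x ≤ s₀ * x - w₀ by
            rw [henvT]; simp only [hd] at hdxge; linarith)]
          ring

end Stmt8Aux

namespace Stmt8Aux

lemma list_sum_map_add {α : Type*} (l : List α) (f g : α → ℝ) :
    (l.map fun a => f a + g a).sum = (l.map f).sum + (l.map g).sum := by
  induction l with
  | nil => simp
  | cons a t ih => simp [ih]; ring

lemma finset_sum_list_sum {J α : Type*} (s : Finset J) (l : List α) (f : α → J → ℝ) :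
    ∑ j ∈ s, (l.map (fun a => f a j)).sum = (l.map (fun a => ∑ j ∈ s, f a j)).sum := by
  induction l with
  | nil => simp
  | cons a t ih => simp [Finset.sum_add_distrib, ih]

lemma mul_foldr_max (c : ℝ) (hc : 0 ≤ c) (l : List ℝ) :
    c * l.foldr max 0 = (l.map (fun y => c * y)).foldr max 0 := by
  induction l with
  | nil => simp
  | cons a t ih => simp only [List.foldr_cons, List.map_cons, mul_max_of_nonneg _ _ hc, ih]

lemma ereal_le_coe_of_forall {a : EReal} {c : ℝ}
    (h : ∀ δ : ℝ, 0 < δ → a ≤ ((c + δ : ℝ) : EReal)) : a ≤ (c : EReal) := by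
  by_contra hcon
  push_neg at hcon
  have h1 := h 1 one_pos
  have ha_top : a ≠ ⊤ := by
    intro h'
    rw [h'] at h1
    exact EReal.coe_ne_top (c + 1) (top_le_iff.1 h1)
  have ha_bot : a ≠ ⊥ := ne_bot_of_gt hcon
  have haar : a = ((a.toReal : ℝ) : EReal) := (EReal.coe_toReal ha_top ha_bot).symm
  rw [haar] at hcon h
  have hca : c < a.toReal := by exact_mod_cast hcon
  have h2 := h ((a.toReal - c)/2) (by linarith)
  have h3 : a.toReal ≤ c + (a.toReal - c)/2 := by exact_mod_cast h2
  linarith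

end Stmt8Aux
set_option maxHeartbeats 1600000 in
/-- `(p,q) ≻_{ε,η} (p',q')` iff `β_x(p,q) ≤ β_{x+ε}(p',q') + η` for all `x ∈ ℝ`. -/
theorem stmt_8 {n n' : ℕ} (p q : Fin n → ℝ) (p' q' : Fin n' → ℝ)
    (hp : ∀ i, 0 ≤ p i) (hq : ∀ i, 0 ≤ q i)
    (hp' : ∀ i, 0 ≤ p' i) (hq' : ∀ i, 0 ≤ q' i)
    (ε η : ℝ) (hε : 0 ≤ ε) (hη : 0 ≤ η) :
    ApproxSubMaj ε η p q p' q' ↔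
      ∀ x : ℝ, beta x p q ≤ beta (x + ε) p' q' + ((η : ℝ) : EReal) := by
  have beta_le_of_test : ∀ {m : ℕ} {x : ℝ} {pp qq t : Fin m → ℝ},
      IsTest t → x ≤ dot t pp → beta x pp qq ≤ ((dot t qq : ℝ) : EReal) :=
    fun ht hx => sInf_le ⟨_, ht, hx, rfl⟩
  constructor
  · rintro ⟨M, a, b, hM, ha, hb, hsa, hsb, hMp, hMq⟩ x
    by_cases htop : beta (x + ε) p' q' = ⊤
    · rw [htop, EReal.top_add_of_ne_bot (by simp : ((η : ℝ) : EReal) ≠ ⊥)]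
      exact le_top
    · have hge0 : (0 : EReal) ≤ beta (x + ε) p' q' := by
        apply le_sInf
        rintro y ⟨t', ht', _, rfl⟩
        have h0 : (0:ℝ) ≤ dot t' q' :=
          Finset.sum_nonneg fun i _ => mul_nonneg (ht' i).1 (hq' i)
        exact_mod_cast h0
      have hbot : beta (x + ε) p' q' ≠ ⊥ := fun h => by simp [h] at hge0
      set Br := (beta (x + ε) p' q').toReal with hBrdef
      have hBr : beta (x + ε) p' q' = ((Br : ℝ) : EReal) := (EReal.coe_toReal htop hbot).symm
      have key : ∀ z : ℝ, beta (x + ε) p' q' < (z : EReal) →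
          beta x p q ≤ ((z + η : ℝ) : EReal) := by
        intro z hz
        obtain ⟨y, ⟨t', ht', htp', rfl⟩, hyz⟩ := sInf_lt_iff.1 hz
        have hq'z : dot t' q' < z := by exact_mod_cast hyz
        set t : Fin n → ℝ := fun j => ∑ i, M i j * t' i with htdef
        have htest : IsTest t := by
          intro j
          constructor
          · exact Finset.sum_nonneg fun i _ => mul_nonneg (hM.1 i j) (ht' i).1
          · calc ∑ i, M i j * t' i ≤ ∑ i, M i j :=
                Finset.sum_le_sum fun i _ => mul_le_of_le_one_right (hM.1 i j) (ht' i).2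
              _ ≤ 1 := hM.2 j
        have hswap : ∀ v : Fin n → ℝ, dot t v = ∑ i, t' i * M.mulVec v i := by
          intro v
          simp only [dot, htdef, Matrix.mulVec, dotProduct]
          calc ∑ j, (∑ i, M i j * t' i) * v j
              = ∑ j, ∑ i, M i j * t' i * v j := by
                apply Finset.sum_congr rfl
                intro j _
                rw [Finset.sum_mul]
            _ = ∑ i, ∑ j, M i j * t' i * v j := Finset.sum_comm
            _ = ∑ i, t' i * ∑ j, M i j * v j := by
                apply Finset.sum_congr rfl
                intro i _
                rw [Finset.mul_sum]
                apply Finset.sum_congr rfl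
                intro j _
                ring
        have htp : x ≤ dot t p := by
          rw [hswap p]
          have h3 : ∑ i, t' i * (p' i - a i) = dot t' p' - ∑ i, t' i * a i := by
            simp only [dot]
            rw [← Finset.sum_sub_distrib]
            apply Finset.sum_congr rfl
            intro i _
            ring
          have h4 : ∑ i, t' i * a i ≤ ∑ i, a i :=
            Finset.sum_le_sum fun i _ => mul_le_of_le_one_left (ha i) (ht' i).2
          have h5 : ∑ i, t' i * (p' i - a i) ≤ ∑ i, t' i * M.mulVec p i :=
            Finset.sum_le_sum fun i _ => mul_le_mul_of_nonneg_left (hMp i) (ht' i).1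
          linarith [htp']
        have htq : dot t q ≤ dot t' q' + η := by
          rw [hswap q]
          have h3 : ∑ i, t' i * (q' i + b i) = dot t' q' + ∑ i, t' i * b i := by
            simp only [dot]
            rw [← Finset.sum_add_distrib]
            apply Finset.sum_congr rfl
            intro i _
            ring
          have h4 : ∑ i, t' i * b i ≤ ∑ i, b i :=
            Finset.sum_le_sum fun i _ => mul_le_of_le_one_left (hb i) (ht' i).2
          have h5 : ∑ i, t' i * M.mulVec q i ≤ ∑ i, t' i * (q' i + b i) :=
            Finset.sum_le_sum fun i _ => mul_le_mul_of_nonneg_left (hMq i) (ht' i).1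
          linarith
        calc beta x p q ≤ ((dot t q : ℝ) : EReal) := beta_le_of_test htest htp
          _ ≤ ((z + η : ℝ) : EReal) := by
              rw [EReal.coe_le_coe_iff]
              linarith
      rw [hBr, ← EReal.coe_add]
      apply Stmt8Aux.ereal_le_coe_of_forall
      intro δ hδ
      have h5 := key (Br + δ) (by rw [hBr]; exact_mod_cast lt_add_of_pos_right Br hδ)
      rw [show Br + η + δ = Br + δ + η from by ring]
      exact h5
  · intro hyp
    -- Step 1: hockey-stick inequalities from the beta hypothesis
    have hockey : ∀ γ : ℝ, 0 ≤ γ →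
        (∑ i, max (p' i - γ * q' i) 0) - ε - γ * η ≤ ∑ j, max (p j - γ * q j) 0 := by
      intro γ hγ
      set t' : Fin n' → ℝ := fun i => if 0 < p' i - γ * q' i then 1 else 0 with ht'def
      have ht' : IsTest t' := by
        intro i
        simp only [ht'def]
        split <;> norm_num
      have hE' : dot t' p' - γ * dot t' q' = ∑ i, max (p' i - γ * q' i) 0 := by
        simp only [dot, ht'def, Finset.mul_sum]
        rw [← Finset.sum_sub_distrib]
        apply Finset.sum_congr rfl
        intro i _
        by_cases hpos : 0 < p' i - γ * q' i
        · rw [if_pos hpos, max_eq_left (le_of_lt hpos)]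
          ring
        · rw [if_neg hpos, max_eq_right (by push_neg at hpos; linarith)]
          ring
      have h1 : beta (dot t' p' - ε) p q ≤ ((dot t' q' + η : ℝ) : EReal) := by
        have h2 := hyp (dot t' p' - ε)
        have h3 : beta (dot t' p' - ε + ε) p' q' ≤ ((dot t' q' : ℝ) : EReal) :=
          beta_le_of_test ht' (by linarith)
        calc beta (dot t' p' - ε) p q
            ≤ beta (dot t' p' - ε + ε) p' q' + ((η : ℝ) : EReal) := h2
          _ ≤ ((dot t' q' : ℝ) : EReal) + ((η : ℝ) : EReal) := add_le_add_left h3 _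
          _ = ((dot t' q' + η : ℝ) : EReal) := (EReal.coe_add _ _).symm
      have key : ∀ δ : ℝ, 0 < δ →
          (∑ i, max (p' i - γ * q' i) 0) - ε - γ * η - δ ≤ ∑ j, max (p j - γ * q j) 0 := by
        intro δ hδ
        have hδ' : 0 < δ / (γ + 1) := by positivity
        have h4 : beta (dot t' p' - ε) p q < ((dot t' q' + η + δ/(γ+1) : ℝ) : EReal) :=
          lt_of_le_of_lt h1
            (by exact_mod_cast (by linarith : dot t' q' + η < dot t' q' + η + δ/(γ+1)))
        obtain ⟨y, ⟨t, ht, htp, rfl⟩, hlt⟩ := sInf_lt_iff.1 h4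
        have htq : dot t q < dot t' q' + η + δ/(γ+1) := by exact_mod_cast hlt
        have h5 : dot t p - γ * dot t q ≤ ∑ j, max (p j - γ * q j) 0 := by
          have h6 : ∀ j, t j * p j - γ * (t j * q j) ≤ max (p j - γ * q j) 0 := by
            intro j
            have heq : t j * p j - γ * (t j * q j) = t j * (p j - γ * q j) := by ring
            rw [heq]
            rcases le_total (p j - γ * q j) 0 with h | h
            · exact le_trans (mul_nonpos_of_nonneg_of_nonpos (ht j).1 h) (le_max_right _ _)
            · refine le_trans ?_ (le_max_left _ _)
              nlinarith [(ht j).2, (ht j).1]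
          calc dot t p - γ * dot t q = ∑ j, (t j * p j - γ * (t j * q j)) := by
                simp only [dot, Finset.mul_sum]
                rw [← Finset.sum_sub_distrib]
            _ ≤ ∑ j, max (p j - γ * q j) 0 := Finset.sum_le_sum fun j _ => h6 j
        have h7 : γ * dot t q ≤ γ * (dot t' q' + η + δ/(γ+1)) :=
          mul_le_mul_of_nonneg_left (le_of_lt htq) hγ
        rw [mul_add, mul_add] at h7
        have h8 : γ * (δ/(γ+1)) + δ/(γ+1) = δ := by
          rw [show γ * (δ/(γ+1)) + δ/(γ+1) = (γ+1) * (δ/(γ+1)) from by ring]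
          exact mul_div_cancel₀ δ (by linarith)
        have h8' : γ * (δ/(γ+1)) ≤ δ := by linarith
        linarith
      by_contra hcon2
      push_neg at hcon2
      have hkey := key (((∑ i, max (p' i - γ * q' i) 0) - ε - γ * η
        - ∑ j, max (p j - γ * q j) 0)/2) (by linarith)
      linarith
    -- trivial case n' = 0
    rcases Nat.eq_zero_or_pos n' with hn'0 | hn'pos
    · subst hn'0
      exact ⟨0, 0, 0, ⟨fun i => i.elim0, fun j => by simp⟩, fun i => i.elim0, fun i => i.elim0,
        by simpa using hε, by simpa using hη, fun i => i.elim0, fun i => i.elim0⟩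
    by_contra hcon
    -- the two convex sets
    set K : Set ((Fin n' → ℝ) × (Fin n' → ℝ)) :=
      (fun M : Matrix (Fin n') (Fin n) ℝ => (M.mulVec p, M.mulVec q)) '' {M | Substochastic M}
      with hKdef
    set D : Set ((Fin n' → ℝ) × (Fin n' → ℝ)) :=
      {uv | (∑ i, max (p' i - uv.1 i) 0) ≤ ε ∧ (∑ i, max (uv.2 i - q' i) 0) ≤ η} with hDdef
    have hdisj : Disjoint K D := by
      rw [Set.disjoint_left]
      rintro uv ⟨M, hM, rfl⟩ hmem
      simp only [hDdef, Set.mem_setOf_eq] at hmem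
      exact hcon ⟨M, fun i => max (p' i - M.mulVec p i) 0, fun i => max (M.mulVec q i - q' i) 0,
        hM, fun i => le_max_right _ _, fun i => le_max_right _ _, hmem.1, hmem.2,
        fun i => by linarith [le_max_left (p' i - M.mulVec p i) 0],
        fun i => by linarith [le_max_left (M.mulVec q i - q' i) 0]⟩
    have hScl : IsClosed {M : Matrix (Fin n') (Fin n) ℝ | Substochastic M} := by
      have h1 : {M : Matrix (Fin n') (Fin n) ℝ | Substochastic M}
          = (⋂ (i : Fin n') (j : Fin n), {M : Matrix (Fin n') (Fin n) ℝ | 0 ≤ M i j}) ∩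
            ⋂ (j : Fin n), {M : Matrix (Fin n') (Fin n) ℝ | ∑ i, M i j ≤ 1} := by
        ext M
        simp only [Set.mem_setOf_eq, Set.mem_inter_iff, Set.mem_iInter, Substochastic]
      rw [h1]
      apply IsClosed.inter
      · exact isClosed_iInter fun i => isClosed_iInter fun j =>
          isClosed_le continuous_const ((continuous_apply j).comp (continuous_apply i))
      · exact isClosed_iInter fun j =>
          isClosed_le (continuous_finset_sum _ fun i _ =>
            (continuous_apply j).comp (continuous_apply i)) continuous_const
    have hSsub : {M : Matrix (Fin n') (Fin n) ℝ | Substochastic M} ⊆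
        (Set.Icc (0 : Fin n' → Fin n → ℝ) (fun _ _ => 1) : Set (Fin n' → Fin n → ℝ)) := by
      intro M hM
      constructor
      · intro i
        intro j
        exact hM.1 i j
      · intro i
        intro j
        have h2 := Finset.single_le_sum (f := fun i' => M i' j)
          (fun i' _ => hM.1 i' j) (Finset.mem_univ i)
        exact le_trans h2 (hM.2 j)
    have hIcc : IsCompact (Set.Icc (0 : Fin n' → Fin n → ℝ) (fun _ _ => 1)) := isCompact_Icc
    have hScomp : IsCompact {M : Matrix (Fin n') (Fin n) ℝ | Substochastic M} :=
      IsCompact.of_isClosed_subset hIcc hScl hSsub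
    have hcont : Continuous (fun M : Matrix (Fin n') (Fin n) ℝ => (M.mulVec p, M.mulVec q)) := by
      apply Continuous.prodMk <;>
      · apply continuous_pi
        intro i
        simp only [Matrix.mulVec, dotProduct]
        exact continuous_finset_sum _ fun j _ =>
          Continuous.mul (f := fun a : Matrix (Fin n') (Fin n) ℝ => a i j)
            ((continuous_apply j).comp (continuous_apply i)) continuous_const
    have hKcomp : IsCompact K := hScomp.image hcont
    have hKconv : Convex ℝ K := by
      rintro uv₁ ⟨M₁, hM₁, rfl⟩ uv₂ ⟨M₂, hM₂, rfl⟩ θ₁ θ₂ hθ₁ hθ₂ hθsum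
      refine ⟨θ₁ • M₁ + θ₂ • M₂, ⟨?_, ?_⟩, ?_⟩
      · intro i j
        have he : (θ₁ • M₁ + θ₂ • M₂) i j = θ₁ * M₁ i j + θ₂ * M₂ i j := rfl
        rw [he]
        exact add_nonneg (mul_nonneg hθ₁ (hM₁.1 i j)) (mul_nonneg hθ₂ (hM₂.1 i j))
      · intro j
        have he : ∀ i, (θ₁ • M₁ + θ₂ • M₂) i j = θ₁ * M₁ i j + θ₂ * M₂ i j := fun i => rfl
        simp only [he]
        rw [Finset.sum_add_distrib, ← Finset.mul_sum, ← Finset.mul_sum]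
        calc θ₁ * ∑ i, M₁ i j + θ₂ * ∑ i, M₂ i j
            ≤ θ₁ * 1 + θ₂ * 1 := add_le_add (mul_le_mul_of_nonneg_left (hM₁.2 j) hθ₁)
              (mul_le_mul_of_nonneg_left (hM₂.2 j) hθ₂)
          _ = 1 := by rw [mul_one, mul_one]; exact hθsum
      · have h1 : (θ₁ • M₁ + θ₂ • M₂).mulVec p = θ₁ • M₁.mulVec p + θ₂ • M₂.mulVec p := by
          rw [Matrix.add_mulVec, Matrix.smul_mulVec, Matrix.smul_mulVec]
        have h2 : (θ₁ • M₁ + θ₂ • M₂).mulVec q = θ₁ • M₁.mulVec q + θ₂ • M₂.mulVec q := by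
          rw [Matrix.add_mulVec, Matrix.smul_mulVec, Matrix.smul_mulVec]
        show ((θ₁ • M₁ + θ₂ • M₂).mulVec p, (θ₁ • M₁ + θ₂ • M₂).mulVec q)
            = θ₁ • (M₁.mulVec p, M₁.mulVec q) + θ₂ • (M₂.mulVec p, M₂.mulVec q)
        rw [h1, h2]
        rfl
    have hmaxconv : ∀ (A B θ₁ θ₂ : ℝ), 0 ≤ θ₁ → 0 ≤ θ₂ →
        max (θ₁ * A + θ₂ * B) 0 ≤ θ₁ * max A 0 + θ₂ * max B 0 := by
      intro A B θ₁ θ₂ h₁ h₂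
      apply max_le
      · exact add_le_add (mul_le_mul_of_nonneg_left (le_max_left _ _) h₁)
          (mul_le_mul_of_nonneg_left (le_max_left _ _) h₂)
      · exact add_nonneg (mul_nonneg h₁ (le_max_right _ _)) (mul_nonneg h₂ (le_max_right _ _))
    have hDconv : Convex ℝ D := by
      rintro ⟨u₁, v₁⟩ h₁mem ⟨u₂, v₂⟩ h₂mem θ₁ θ₂ hθ₁ hθ₂ hθsum
      simp only [hDdef, Set.mem_setOf_eq] at h₁mem h₂mem ⊢
      constructor
      · calc ∑ i, max (p' i - (θ₁ • ((u₁, v₁) : (Fin n' → ℝ) × (Fin n' → ℝ))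
              + θ₂ • ((u₂, v₂) : (Fin n' → ℝ) × (Fin n' → ℝ))).1 i) 0
            = ∑ i, max (θ₁ * (p' i - u₁ i) + θ₂ * (p' i - u₂ i)) 0 := by
              apply Finset.sum_congr rfl
              intro i _
              congr 1
              have he : (θ₁ • ((u₁, v₁) : (Fin n' → ℝ) × (Fin n' → ℝ))
                  + θ₂ • ((u₂, v₂) : (Fin n' → ℝ) × (Fin n' → ℝ))).1 i
                  = θ₁ * u₁ i + θ₂ * u₂ i := rfl
              rw [he]
              linear_combination (-(p' i)) * hθsum
          _ ≤ ∑ i, (θ₁ * max (p' i - u₁ i) 0 + θ₂ * max (p' i - u₂ i) 0) :=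
              Finset.sum_le_sum fun i _ => hmaxconv _ _ _ _ hθ₁ hθ₂
          _ = θ₁ * (∑ i, max (p' i - u₁ i) 0) + θ₂ * (∑ i, max (p' i - u₂ i) 0) := by
              rw [Finset.sum_add_distrib, Finset.mul_sum, Finset.mul_sum]
          _ ≤ θ₁ * ε + θ₂ * ε := add_le_add (mul_le_mul_of_nonneg_left h₁mem.1 hθ₁)
              (mul_le_mul_of_nonneg_left h₂mem.1 hθ₂)
          _ = ε := by rw [← add_mul, hθsum, one_mul]
      · calc ∑ i, max ((θ₁ • ((u₁, v₁) : (Fin n' → ℝ) × (Fin n' → ℝ))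
              + θ₂ • ((u₂, v₂) : (Fin n' → ℝ) × (Fin n' → ℝ))).2 i - q' i) 0
            = ∑ i, max (θ₁ * (v₁ i - q' i) + θ₂ * (v₂ i - q' i)) 0 := by
              apply Finset.sum_congr rfl
              intro i _
              congr 1
              have he : (θ₁ • ((u₁, v₁) : (Fin n' → ℝ) × (Fin n' → ℝ))
                  + θ₂ • ((u₂, v₂) : (Fin n' → ℝ) × (Fin n' → ℝ))).2 i
                  = θ₁ * v₁ i + θ₂ * v₂ i := rfl
              rw [he]
              linear_combination (q' i) * hθsum
          _ ≤ ∑ i, (θ₁ * max (v₁ i - q' i) 0 + θ₂ * max (v₂ i - q' i) 0) :=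
              Finset.sum_le_sum fun i _ => hmaxconv _ _ _ _ hθ₁ hθ₂
          _ = θ₁ * (∑ i, max (v₁ i - q' i) 0) + θ₂ * (∑ i, max (v₂ i - q' i) 0) := by
              rw [Finset.sum_add_distrib, Finset.mul_sum, Finset.mul_sum]
          _ ≤ θ₁ * η + θ₂ * η := add_le_add (mul_le_mul_of_nonneg_left h₁mem.2 hθ₁)
              (mul_le_mul_of_nonneg_left h₂mem.2 hθ₂)
          _ = η := by rw [← add_mul, hθsum, one_mul]
    have hDcl : IsClosed D := by
      have hDeq : D = {uv : (Fin n' → ℝ) × (Fin n' → ℝ) | (∑ i, max (p' i - uv.1 i) 0) ≤ ε}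
          ∩ {uv : (Fin n' → ℝ) × (Fin n' → ℝ) | (∑ i, max (uv.2 i - q' i) 0) ≤ η} := rfl
      rw [hDeq]
      apply IsClosed.inter
      · apply isClosed_le _ continuous_const
        exact continuous_finset_sum _ fun i _ =>
          (continuous_const.sub ((continuous_apply i).comp continuous_fst)).max continuous_const
      · apply isClosed_le _ continuous_const
        exact continuous_finset_sum _ fun i _ =>
          (((continuous_apply i).comp continuous_snd).sub continuous_const).max continuous_const
    obtain ⟨f, u, v, hfK, huv, hfD⟩ :=
      geometric_hahn_banach_compact_closed hKconv hKcomp hDconv hDcl hdisj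
    -- decompose the functional
    set s : Fin n' → ℝ := fun i => f (Pi.single i 1, 0) with hsdef
    set w : Fin n' → ℝ := fun i => - f (0, Pi.single i 1) with hwdef
    have hsingle_nonneg : ∀ (i0 k : Fin n'), (0:ℝ) ≤ (Pi.single i0 1 : Fin n' → ℝ) k := by
      intro i0 k
      rw [Pi.single_apply]
      split <;> norm_num
    have hf : ∀ uv : (Fin n' → ℝ) × (Fin n' → ℝ),
        f uv = (∑ i, uv.1 i * s i) - ∑ i, uv.2 i * w i := by
      intro uv
      obtain ⟨u', v'⟩ := uv
      have hu' : ∀ (g : Fin n' → ℝ), g = ∑ i, g i • (Pi.single i 1 : Fin n' → ℝ) := by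
        intro g
        have he : ∀ i, g i • (Pi.single i 1 : Fin n' → ℝ) = Pi.single i (g i) := fun i => by
          rw [← Pi.single_smul, smul_eq_mul, mul_one]
        rw [Finset.sum_congr rfl fun i _ => he i, Finset.univ_sum_single]
      have hdec : (⟨u', v'⟩ : (Fin n' → ℝ) × (Fin n' → ℝ))
          = (∑ i, u' i • ((Pi.single i 1 : Fin n' → ℝ), (0 : Fin n' → ℝ)))
            + ∑ i, v' i • ((0 : Fin n' → ℝ), (Pi.single i 1 : Fin n' → ℝ)) := by
        apply Prod.ext
        · simp only [Prod.fst_add, Prod.fst_sum, Prod.smul_fst, smul_zero,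
            Finset.sum_const_zero, add_zero]
          exact hu' u'
        · simp only [Prod.snd_add, Prod.snd_sum, Prod.smul_snd, smul_zero,
            Finset.sum_const_zero, zero_add]
          exact hu' v'
      conv_lhs => rw [hdec]
      rw [map_add, map_sum, map_sum]
      simp only [map_smul, smul_eq_mul, hsdef, hwdef, mul_neg]
      rw [Finset.sum_neg_distrib]
      ring
    have hsum_single : ∀ (g h : Fin n' → ℝ) (c : ℝ) (i0 : Fin n'),
        ∑ k, (g k + c * (Pi.single i0 1 : Fin n' → ℝ) k) * h k = (∑ k, g k * h k) + c * h i0 := by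
      intro g h c i0
      calc ∑ k, (g k + c * (Pi.single i0 1 : Fin n' → ℝ) k) * h k
          = ∑ k, (g k * h k + (if k = i0 then c * h k else 0)) := by
            apply Finset.sum_congr rfl
            intro k _
            rw [Pi.single_apply]
            split <;> ring
        _ = (∑ k, g k * h k) + ∑ k, (if k = i0 then c * h k else 0) := Finset.sum_add_distrib
        _ = (∑ k, g k * h k) + c * h i0 := by
            rw [Finset.sum_ite_eq' Finset.univ i0]
            simp
    have hD0mem : ((p', q') : (Fin n' → ℝ) × (Fin n' → ℝ)) ∈ D := by
      simp only [hDdef, Set.mem_setOf_eq]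
      constructor
      · have hz : ∀ k : Fin n', max (p' k - p' k) 0 = 0 := fun k => by rw [sub_self, max_self]
        calc ∑ k, max (p' k - p' k) 0 = ∑ k, (0:ℝ) := Finset.sum_congr rfl fun k _ => hz k
          _ = 0 := Finset.sum_const_zero
          _ ≤ ε := hε
      · have hz : ∀ k : Fin n', max (q' k - q' k) 0 = 0 := fun k => by rw [sub_self, max_self]
        calc ∑ k, max (q' k - q' k) 0 = ∑ k, (0:ℝ) := Finset.sum_congr rfl fun k _ => hz k
          _ = 0 := Finset.sum_const_zero
          _ ≤ η := hη
    have hfD0 : v < (∑ k, p' k * s k) - (∑ k, q' k * w k) := by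
      have h1 := hfD _ hD0mem
      rw [hf] at h1
      simpa using h1
    -- nonnegativity of s and w
    have hspos : ∀ i, 0 ≤ s i := by
      intro i
      by_contra hneg
      push_neg at hneg
      -- move far in direction +single i on first coordinate: but D requires u there... u can increase freely
      -- D membership for arbitrary large c:
      have hmemD' : ∀ c : ℝ, 0 ≤ c →
          ((fun k => p' k + c * (Pi.single i 1 : Fin n' → ℝ) k, q') : (Fin n' → ℝ) × (Fin n' → ℝ)) ∈ D := by
        intro c hc
        simp only [hDdef, Set.mem_setOf_eq]
        constructor
        · have hz : ∀ k, max (p' k - (p' k + c * (Pi.single i 1 : Fin n' → ℝ) k)) 0 = 0 := by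
            intro k
            apply max_eq_right
            have := mul_nonneg hc (hsingle_nonneg i k)
            linarith
          calc ∑ k, max (p' k - (p' k + c * (Pi.single i 1 : Fin n' → ℝ) k)) 0
              = ∑ k, (0:ℝ) := Finset.sum_congr rfl fun k _ => hz k
            _ = 0 := Finset.sum_const_zero
            _ ≤ ε := hε
        · have hz : ∀ k : Fin n', max (q' k - q' k) 0 = 0 := by
            intro k
            rw [sub_self, max_self]
          calc ∑ k, max (q' k - q' k) 0
              = ∑ k, (0:ℝ) := Finset.sum_congr rfl fun k _ => hz k
            _ = 0 := Finset.sum_const_zero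
            _ ≤ η := hη
      set F0 : ℝ := (∑ k, p' k * s k) - (∑ k, q' k * w k) with hF0def
      set c : ℝ := (F0 - v + 1) / (-(s i)) with hcdef
      have hc : 0 ≤ c := le_of_lt (div_pos (by linarith) (by linarith))
      have h1 := hfD _ (hmemD' c hc)
      have h2 : f ((fun k => p' k + c * (Pi.single i 1 : Fin n' → ℝ) k, q') :
          (Fin n' → ℝ) × (Fin n' → ℝ)) = F0 + c * s i := by
        rw [hf]
        simp only []
        rw [hsum_single p' s c i]
        rw [hF0def]
        ring
      rw [h2] at h1
      have h9 : c * (-(s i)) = F0 - v + 1 := div_mul_cancel₀ _ (by linarith : -(s i) ≠ 0)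
      have h10 : c * s i = -(c * -(s i)) := by ring
      rw [h10, h9] at h1
      linarith
    have hwpos : ∀ i, 0 ≤ w i := by
      intro i
      by_contra hneg
      push_neg at hneg
      have hmemD' : ∀ c : ℝ, c ≤ 0 →
          ((p', fun k => q' k + c * (Pi.single i 1 : Fin n' → ℝ) k) : (Fin n' → ℝ) × (Fin n' → ℝ)) ∈ D := by
        intro c hc
        simp only [hDdef, Set.mem_setOf_eq]
        constructor
        · have hz : ∀ k : Fin n', max (p' k - p' k) 0 = 0 := by
            intro k
            rw [sub_self, max_self]
          calc ∑ k, max (p' k - p' k) 0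
              = ∑ k, (0:ℝ) := Finset.sum_congr rfl fun k _ => hz k
            _ = 0 := Finset.sum_const_zero
            _ ≤ ε := hε
        · have hz : ∀ k, max ((q' k + c * (Pi.single i 1 : Fin n' → ℝ) k) - q' k) 0 = 0 := by
            intro k
            apply max_eq_right
            have := mul_nonpos_of_nonpos_of_nonneg hc (hsingle_nonneg i k)
            linarith
          calc ∑ k, max ((q' k + c * (Pi.single i 1 : Fin n' → ℝ) k) - q' k) 0
              = ∑ k, (0:ℝ) := Finset.sum_congr rfl fun k _ => hz k
            _ = 0 := Finset.sum_const_zero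
            _ ≤ η := hη
      set F0 : ℝ := (∑ k, p' k * s k) - (∑ k, q' k * w k) with hF0def
      set c : ℝ := (F0 - v + 1) / (w i) with hcdef
      have hc : c ≤ 0 := le_of_lt (div_neg_of_pos_of_neg (by linarith) hneg)
      have h1 := hfD _ (hmemD' c hc)
      have h2 : f ((p', fun k => q' k + c * (Pi.single i 1 : Fin n' → ℝ) k) :
          (Fin n' → ℝ) × (Fin n' → ℝ)) = F0 - c * w i := by
        rw [hf]
        simp only []
        rw [hsum_single q' w c i]
        rw [hF0def]
        ring
      rw [h2] at h1
      have h9 : c * (w i) = F0 - v + 1 := div_mul_cancel₀ _ (ne_of_lt hneg)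
      rw [h9] at h1
      linarith
    -- argmax indices
    obtain ⟨istar, _, histar⟩ := Finset.exists_max_image Finset.univ s
      ⟨⟨0, hn'pos⟩, Finset.mem_univ _⟩
    obtain ⟨jstar, _, hjstar⟩ := Finset.exists_max_image Finset.univ w
      ⟨⟨0, hn'pos⟩, Finset.mem_univ _⟩
    -- the corner point of D
    have hstarmem : ((fun k => p' k + (-ε) * (Pi.single istar 1 : Fin n' → ℝ) k,
        fun k => q' k + η * (Pi.single jstar 1 : Fin n' → ℝ) k) :
        (Fin n' → ℝ) × (Fin n' → ℝ)) ∈ D := by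
      simp only [hDdef, Set.mem_setOf_eq]
      have hsum1 : ∑ k, (Pi.single istar 1 : Fin n' → ℝ) k = 1 := by
        simp [Pi.single_apply]
      have hsum2 : ∑ k, (Pi.single jstar 1 : Fin n' → ℝ) k = 1 := by
        simp [Pi.single_apply]
      constructor
      · have hz : ∀ k : Fin n',
            max (p' k - (p' k + (-ε) * (Pi.single istar 1 : Fin n' → ℝ) k)) 0
            = ε * (Pi.single istar 1 : Fin n' → ℝ) k := by
          intro k
          rw [show p' k - (p' k + (-ε) * (Pi.single istar 1 : Fin n' → ℝ) k)
              = ε * (Pi.single istar 1 : Fin n' → ℝ) k from by ring]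
          exact max_eq_left (mul_nonneg hε (hsingle_nonneg istar k))
        calc ∑ k, max (p' k - (p' k + (-ε) * (Pi.single istar 1 : Fin n' → ℝ) k)) 0
            = ∑ k, ε * (Pi.single istar 1 : Fin n' → ℝ) k :=
              Finset.sum_congr rfl fun k _ => hz k
          _ = ε := by rw [← Finset.mul_sum, hsum1, mul_one]
          _ ≤ ε := le_rfl
      · have hz : ∀ k : Fin n',
            max ((q' k + η * (Pi.single jstar 1 : Fin n' → ℝ) k) - q' k) 0
            = η * (Pi.single jstar 1 : Fin n' → ℝ) k := by
          intro k
          rw [show (q' k + η * (Pi.single jstar 1 : Fin n' → ℝ) k) - q' k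
              = η * (Pi.single jstar 1 : Fin n' → ℝ) k from by ring]
          exact max_eq_left (mul_nonneg hη (hsingle_nonneg jstar k))
        calc ∑ k, max ((q' k + η * (Pi.single jstar 1 : Fin n' → ℝ) k) - q' k) 0
            = ∑ k, η * (Pi.single jstar 1 : Fin n' → ℝ) k :=
              Finset.sum_congr rfl fun k _ => hz k
          _ = η := by rw [← Finset.mul_sum, hsum2, mul_one]
          _ ≤ η := le_rfl
    have hstar := hfD _ hstarmem
    have hstarval : f (fun k => p' k + (-ε) * (Pi.single istar 1 : Fin n' → ℝ) k,
        fun k => q' k + η * (Pi.single jstar 1 : Fin n' → ℝ) k)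
        = ((∑ k, p' k * s k) - (∑ k, q' k * w k)) + (-ε) * s istar - η * w jstar := by
      rw [hf]
      simp only []
      rw [hsum_single p' s (-ε) istar, hsum_single q' w η jstar]
      ring
    rw [hstarval] at hstar
    -- the optimal deterministic substochastic matrix
    have hselex : ∀ j : Fin n, ∃ i0 : Fin n',
        ∀ i', s i' * p j - w i' * q j ≤ s i0 * p j - w i0 * q j := by
      intro j
      obtain ⟨i0, _, hi0⟩ := Finset.exists_max_image Finset.univ
        (fun i => s i * p j - w i * q j) ⟨⟨0, hn'pos⟩, Finset.mem_univ _⟩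
      exact ⟨i0, fun i' => hi0 i' (Finset.mem_univ _)⟩
    choose sel hsel using hselex
    set θ : Fin n → ℝ := fun j => if 0 < s (sel j) * p j - w (sel j) * q j then 1 else 0
      with hθdef
    set M0 : Matrix (Fin n') (Fin n) ℝ := fun i j => if i = sel j then θ j else 0 with hM0def
    have hθ01 : ∀ j, 0 ≤ θ j ∧ θ j ≤ 1 := by
      intro j
      simp only [hθdef]
      split <;> norm_num
    have hM0 : Substochastic M0 := by
      constructor
      · intro i j
        simp only [hM0def]
        split
        · exact (hθ01 j).1
        · exact le_rfl
      · intro j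
        simp only [hM0def]
        rw [Finset.sum_ite_eq' Finset.univ (sel j) (fun _ => θ j)]
        simp [(hθ01 j).2]
    have hM0K : (M0.mulVec p, M0.mulVec q) ∈ K := ⟨M0, hM0, rfl⟩
    have hcompute : ∀ (vv : Fin n → ℝ) (c : Fin n' → ℝ),
        ∑ i, M0.mulVec vv i * c i = ∑ j, θ j * (c (sel j) * vv j) := by
      intro vv c
      simp only [Matrix.mulVec, dotProduct, hM0def]
      calc ∑ i, (∑ j, (if i = sel j then θ j else 0) * vv j) * c i
          = ∑ i, ∑ j, (if i = sel j then θ j * (c i * vv j) else 0) := by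
            apply Finset.sum_congr rfl
            intro i _
            rw [Finset.sum_mul]
            apply Finset.sum_congr rfl
            intro j _
            split
            · ring
            · ring
        _ = ∑ j, ∑ i, (if i = sel j then θ j * (c i * vv j) else 0) := Finset.sum_comm
        _ = ∑ j, θ j * (c (sel j) * vv j) := by
            apply Finset.sum_congr rfl
            intro j _
            rw [Finset.sum_ite_eq' Finset.univ (sel j)]
            simp
    have hfM0 : f (M0.mulVec p, M0.mulVec q)
        = ∑ j, max (s (sel j) * p j - w (sel j) * q j) 0 := by
      rw [hf]
      simp only []
      rw [hcompute p s, hcompute q w, ← Finset.sum_sub_distrib]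
      apply Finset.sum_congr rfl
      intro j _
      simp only [hθdef]
      split
      · rw [max_eq_left (le_of_lt (by assumption))]
        ring
      · rw [max_eq_right (not_lt.1 (by assumption))]
        ring
    have hKlt : ∑ j, max (s (sel j) * p j - w (sel j) * q j) 0 < u := by
      have h1 := hfK _ hM0K
      rw [hfM0] at h1
      exact h1
    -- the sorted list of pairs and its hockey-stick representation
    set L0 : List (ℝ × ℝ) := List.ofFn (fun i : Fin n' => (s i, w i)) with hL0def
    set L : List (ℝ × ℝ) := List.insertionSort Stmt8Aux.Rel L0 with hLdef
    have hLperm : L.Perm L0 := List.perm_insertionSort _ L0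
    have hLsort : L.Pairwise Stmt8Aux.Rel := List.pairwise_insertionSort _ L0
    have hLmem : ∀ sw ∈ L, ∃ i, sw = (s i, w i) := by
      intro sw hsw
      have h1 : sw ∈ L0 := hLperm.mem_iff.1 hsw
      rw [hL0def, List.mem_ofFn] at h1
      obtain ⟨i, hi⟩ := h1
      exact ⟨i, hi.symm⟩
    have hmemL : ∀ i, (s i, w i) ∈ L := fun i =>
      hLperm.mem_iff.2 (by rw [hL0def, List.mem_ofFn]; exact ⟨i, rfl⟩)
    have hLnn : ∀ sw ∈ L, 0 ≤ sw.1 ∧ 0 ≤ sw.2 := by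
      intro sw hsw
      obtain ⟨i, rfl⟩ := hLmem sw hsw
      exact ⟨hspos i, hwpos i⟩
    obtain ⟨C, hCnn, hCsum, hCg, hCid⟩ := Stmt8Aux.rep_exists L hLnn hLsort
    have hSL : (L.map Prod.fst).foldr max 0 ≤ s istar := by
      apply Stmt8Aux.foldr_max_le (hspos istar)
      intro y hy
      obtain ⟨sw, hsw, rfl⟩ := List.mem_map.1 hy
      obtain ⟨i, rfl⟩ := hLmem sw hsw
      exact histar i (Finset.mem_univ _)
    have hLne : L ≠ [] := by
      have hlen : L.length = n' := by rw [hLperm.length_eq, hL0def, List.length_ofFn]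
      intro h
      rw [h] at hlen
      simp at hlen
      omega
    have hheadw : (L.headI).2 ≤ w jstar := by
      rcases hLcase : L with _ | ⟨hd, tl⟩
      · exact absurd hLcase hLne
      · have hmem : hd ∈ L := by rw [hLcase]; exact List.mem_cons_self
        obtain ⟨i, hi⟩ := hLmem hd hmem
        show hd.2 ≤ w jstar
        rw [hi]
        exact hjstar i (Finset.mem_univ _)
    -- two-dimensional evaluation of the representation
    have hG : ∀ P Q : ℝ, 0 ≤ P → 0 ≤ Q →
        (C.map fun cg => cg.1 * max (P - cg.2 * Q) 0).sum
          = (L.map fun sw => sw.1 * P - sw.2 * Q).foldr max 0 := by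
      intro P Q hP hQ
      rcases eq_or_lt_of_le hQ with hQ0 | hQpos
      · have hLHS : (C.map fun cg => cg.1 * max (P - cg.2 * Q) 0).sum
            = (C.map Prod.fst).sum * P := by
          rw [show (C.map fun cg => cg.1 * max (P - cg.2 * Q) 0) = C.map fun cg => cg.1 * P from
            List.map_congr_left fun cg _ => by rw [← hQ0, mul_zero, sub_zero, max_eq_left hP]]
          exact List.sum_map_mul_right C Prod.fst P
        have hRHS : (L.map fun sw => sw.1 * P - sw.2 * Q).foldr max 0
            = P * ((L.map Prod.fst).foldr max 0) := by
          rw [Stmt8Aux.mul_foldr_max P hP, List.map_map]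
          congr 1
          apply List.map_congr_left
          intro sw _
          simp only [Function.comp]
          rw [← hQ0, mul_zero, sub_zero]
          ring
        rw [hLHS, hRHS, hCsum]
        ring
      · have hx : 0 ≤ P / Q := div_nonneg hP (le_of_lt hQpos)
        have hid := hCid (P/Q) hx
        have hL1 : Q * Stmt8Aux.sticks C (P/Q)
            = (C.map fun cg => cg.1 * max (P - cg.2 * Q) 0).sum := by
          unfold Stmt8Aux.sticks
          rw [← List.sum_map_mul_left]
          congr 1
          apply List.map_congr_left
          intro cg _
          rw [show Q * (cg.1 * max (P/Q - cg.2) 0) = cg.1 * (Q * max (P/Q - cg.2) 0) from by ring,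
            mul_max_of_nonneg _ _ (le_of_lt hQpos), mul_zero,
            show Q * (P/Q - cg.2) = P - cg.2 * Q from by
              rw [mul_sub, mul_div_cancel₀ _ (ne_of_gt hQpos)]; ring]
        have hL2 : Q * Stmt8Aux.env L (P/Q)
            = (L.map fun sw => sw.1 * P - sw.2 * Q).foldr max 0 := by
          unfold Stmt8Aux.env
          rw [Stmt8Aux.mul_foldr_max Q (le_of_lt hQpos), List.map_map]
          congr 1
          apply List.map_congr_left
          intro sw _
          simp only [Function.comp]
          field_simp
        rw [← hL1, ← hL2, hid]
    -- bounds relating the envelope to the original data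
    have hup : ∀ j, (L.map fun sw => sw.1 * p j - sw.2 * q j).foldr max 0
        ≤ max (s (sel j) * p j - w (sel j) * q j) 0 := by
      intro j
      apply Stmt8Aux.foldr_max_le (le_max_right _ _)
      intro y hy
      obtain ⟨sw, hsw, rfl⟩ := List.mem_map.1 hy
      obtain ⟨i, rfl⟩ := hLmem sw hsw
      exact le_trans (hsel j i) (le_max_left _ _)
    have hlow : ∀ i, s i * p' i - w i * q' i
        ≤ (L.map fun sw => sw.1 * p' i - sw.2 * q' i).foldr max 0 :=
      fun i => Stmt8Aux.le_foldr_max _ (List.mem_map_of_mem (hmemL i))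
    -- main chain of inequalities
    have hmain : (∑ i, (s i * p' i - w i * q' i)) - ε * s istar - η * w jstar
        ≤ ∑ j, max (s (sel j) * p j - w (sel j) * q j) 0 := by
      have step1 : (∑ i, (s i * p' i - w i * q' i))
          ≤ ∑ i, (C.map fun cg => cg.1 * max (p' i - cg.2 * q' i) 0).sum := by
        apply Finset.sum_le_sum
        intro i _
        rw [hG (p' i) (q' i) (hp' i) (hq' i)]
        exact hlow i
      have step2 : ∑ i, (C.map fun cg => cg.1 * max (p' i - cg.2 * q' i) 0).sum
          = (C.map fun cg => cg.1 * ∑ i, max (p' i - cg.2 * q' i) 0).sum := by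
        rw [Stmt8Aux.finset_sum_list_sum]
        congr 1
        apply List.map_congr_left
        intro cg _
        rw [Finset.mul_sum]
      have step3 : (C.map fun cg => cg.1 * ∑ i, max (p' i - cg.2 * q' i) 0).sum
          ≤ (C.map fun cg => cg.1 * (∑ j, max (p j - cg.2 * q j) 0)
              + (cg.1 * ε + cg.1 * cg.2 * η)).sum := by
        apply Stmt8Aux.list_sum_le_sum
        intro cg hcg
        have h9 := hockey cg.2 (hCnn cg hcg).2
        have h10 := mul_le_mul_of_nonneg_left h9 (hCnn cg hcg).1
        nlinarith [h10]
      have step4 : (C.map fun cg => cg.1 * (∑ j, max (p j - cg.2 * q j) 0)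
              + (cg.1 * ε + cg.1 * cg.2 * η)).sum
          = (C.map fun cg => cg.1 * (∑ j, max (p j - cg.2 * q j) 0)).sum
            + ((C.map Prod.fst).sum * ε + (C.map fun cg => cg.1 * cg.2).sum * η) := by
        rw [Stmt8Aux.list_sum_map_add]
        congr 1
        rw [Stmt8Aux.list_sum_map_add]
        congr 1
        · exact List.sum_map_mul_right C Prod.fst ε
        · exact List.sum_map_mul_right C (fun cg => cg.1 * cg.2) η
      have step5 : (C.map fun cg => cg.1 * (∑ j, max (p j - cg.2 * q j) 0)).sum
          = ∑ j, (C.map fun cg => cg.1 * max (p j - cg.2 * q j) 0).sum := by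
        rw [Stmt8Aux.finset_sum_list_sum]
        congr 1
        apply List.map_congr_left
        intro cg _
        rw [Finset.mul_sum]
      have step6 : ∑ j, (C.map fun cg => cg.1 * max (p j - cg.2 * q j) 0).sum
          ≤ ∑ j, max (s (sel j) * p j - w (sel j) * q j) 0 := by
        apply Finset.sum_le_sum
        intro j _
        rw [hG (p j) (q j) (hp j) (hq j)]
        exact hup j
      have hεterm : (C.map Prod.fst).sum * ε ≤ s istar * ε :=
        mul_le_mul_of_nonneg_right (le_trans (le_of_eq hCsum) hSL) hε
      have hηterm : (C.map fun cg => cg.1 * cg.2).sum * η ≤ w jstar * η :=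
        mul_le_mul_of_nonneg_right (le_trans hCg hheadw) hη
      nlinarith [step1, step3, hεterm, hηterm, step2, step4, step5, step6]
    -- final contradiction
    have hsum_eq : ∑ i, (s i * p' i - w i * q' i) = (∑ k, p' k * s k) - (∑ k, q' k * w k) := by
      rw [← Finset.sum_sub_distrib]
      apply Finset.sum_congr rfl
      intro i _
      ring
    rw [hsum_eq] at hmain
    have hneg : (-ε) * s istar = -(ε * s istar) := by ring
    rw [hneg] at hstar
    linarith [hstar, hmain, hKlt, huv]
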